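/- Let T be a finite tree and let U₁, U₂ be two vertex subsets of the same size i such that the induced subgraphs T[U₁] and T[U₂] are both connected. Then there exists a finite sequence U₁ = W₀, W₁, …, W_m = U₂ of vertex sets, each of size i and each inducing a connected subgraph of T, such that consecutive sets W_k and W_{k+1} differ by removing one vertex from W_k and adding one vertex, i.e., |W_k ∩ W_{k+1}| = i − 1. -/

import Mathlib

section helpers

set_option linter.unusedSectionVars false

open SimpleGraph Finset

variable {V : Type*} [Fintype V] [DecidableEq V] {G : SimpleGraph V}

/-- Walk up: a walk in an induced subgraph on `s` gives a walk in `G` with support in `s`. -/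
lemma exists_walk_in_set {s : Set V} (h : (G.induce s).Connected) {a b : V}
    (ha : a ∈ s) (hb : b ∈ s) :
    ∃ p : G.Walk a b, ∀ x ∈ p.support, x ∈ s := by
  obtain ⟨q⟩ := h.preconnected ⟨a, ha⟩ ⟨b, hb⟩
  refine ⟨q.map (SimpleGraph.Embedding.induce s).toHom, ?_⟩
  intro x hx
  have hx' : x ∈ q.support.map (SimpleGraph.Embedding.induce (G := G) s).toHom := by
    rw [← SimpleGraph.Walk.support_map]; exact hx
  obtain ⟨y, _, rfl⟩ := List.mem_map.1 hx'
  exact y.2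

/-- Walk down: if every vertex of `s` has a walk to `u` with support in `s`,
then the induced graph on `s` is connected. -/
lemma connected_of_walks {s : Set V} {u : V} (hu : u ∈ s)
    (h : ∀ v ∈ s, ∃ p : G.Walk v u, ∀ x ∈ p.support, x ∈ s) :
    (G.induce s).Connected := by
  apply G.induce_connected_of_patches u hu
  intro v hv
  obtain ⟨p, hp⟩ := h v hv
  refine ⟨{x | x ∈ p.support}, hp, p.end_mem_support, p.start_mem_support, ?_⟩
  exact p.connected_induce_support.preconnected _ _

/-- In an acyclic graph, any path between two vertices of a connected induced set
has support inside the set. -/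
lemma path_support_subset (hacyc : G.IsAcyclic) {s : Set V} (hconn : (G.induce s).Connected)
    {a b : V} (ha : a ∈ s) (hb : b ∈ s) {p : G.Walk a b} (hp : p.IsPath) :
    ∀ x ∈ p.support, x ∈ s := by
  obtain ⟨q, hq⟩ := exists_walk_in_set hconn ha hb
  have h1 : (⟨p, hp⟩ : G.Path a b) = q.toPath := isAcyclic_iff_path_unique.mp hacyc _ _
  have h2 : p = (q.toPath : G.Walk a b) := congrArg Subtype.val h1
  intro x hx
  exact hq x (q.support_toPath_subset (h2 ▸ hx))

/-- In an acyclic graph, the length of any path equals the distance. -/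
lemma dist_eq_path_length (hacyc : G.IsAcyclic) {a b : V} {p : G.Walk a b} (hp : p.IsPath) :
    G.dist a b = p.length := by
  refine le_antisymm (SimpleGraph.dist_le p) ?_
  obtain ⟨q, hq⟩ := Reachable.exists_walk_length_eq_dist ⟨p⟩
  have h1 : (⟨p, hp⟩ : G.Path a b) = q.toPath := isAcyclic_iff_path_unique.mp hacyc _ _
  have h2 : p = (q.toPath : G.Walk a b) := congrArg Subtype.val h1
  have : p.length ≤ q.length := by
    rw [h2]
    exact q.length_bypass_le
  omega

/-- If `ℓ` is at maximal distance from `u`, it is not on the path from `x` to `u`. -/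
lemma not_mem_path_of_max (hacyc : G.IsAcyclic) {u ℓ x : V}
    (hdx : G.dist u x ≤ G.dist u ℓ) (hxℓ : x ≠ ℓ) {p : G.Walk x u} (hp : p.IsPath) :
    ℓ ∉ p.support := by
  intro hmem
  have hdecomp := p.take_spec hmem
  have hdrop := hp.dropUntil hmem
  have hlen : (p.takeUntil ℓ hmem).length + (p.dropUntil ℓ hmem).length = p.length := by
    rw [← SimpleGraph.Walk.length_append, hdecomp]
  have h1 : G.dist x u = p.length := dist_eq_path_length hacyc hp
  have h2 : G.dist ℓ u = (p.dropUntil ℓ hmem).length := dist_eq_path_length hacyc hdrop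
  have h3 : (p.takeUntil ℓ hmem).length ≠ 0 := fun h => hxℓ (SimpleGraph.Walk.eq_of_length_eq_zero h)
  rw [SimpleGraph.dist_comm (u := u) (v := x), SimpleGraph.dist_comm (u := u) (v := ℓ)] at hdx
  omega

/-- Erasing a suitable vertex keeps the induced graph connected. -/
lemma erase_connected {W : Finset V} {u ℓ : V} (hu : u ∈ W) (hne : u ≠ ℓ)
    (hW : (G.induce (↑W : Set V)).Connected)
    (h : ∀ x ∈ W, x ≠ ℓ → ∀ (p : G.Walk x u), p.IsPath → ℓ ∉ p.support) :
    (G.induce (↑(W.erase ℓ) : Set V)).Connected := by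
  have hu' : u ∈ (↑(W.erase ℓ) : Set V) := by simp [Finset.mem_erase, hne, hu]
  apply connected_of_walks hu'
  intro v hv
  have hv' : v ≠ ℓ ∧ v ∈ W := Finset.mem_erase.mp hv
  obtain ⟨p, hps⟩ := exists_walk_in_set hW (by exact hv'.2) (by exact hu)
  refine ⟨p.bypass, ?_⟩
  intro x hx
  have hxW : x ∈ W := hps x (p.support_bypass_subset hx)
  have hxℓ : x ≠ ℓ := by
    rintro rfl
    exact h v hv'.2 hv'.1 p.bypass p.bypass_isPath hx
  simp [Finset.mem_erase, hxℓ, hxW]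

/-- A connected induced graph stays connected after inserting an adjacent vertex. -/
lemma insert_connected {U : Finset V} (hc : (G.induce (↑U : Set V)).Connected)
    {a w : V} (ha : a ∈ U) (haw : G.Adj a w) :
    (G.induce (↑(insert w U) : Set V)).Connected := by
  have hw : (G.induce ({w} : Set V)).Connected := by
    rw [SimpleGraph.induce_singleton_eq_top]
    constructor
    · intro x y
      have : x = y := Subsingleton.elim x y
      rw [this]
  have hcoe : (↑(insert w U) : Set V) = ↑U ∪ {w} := by
    ext x; simp [or_comm]
  rw [hcoe]
  exact SimpleGraph.connected_induce_union hc.preconnected hw.preconnected ha rfl haw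

/-- Crossing edge: a walk from outside `A` into `A` contains a crossing edge. -/
lemma exists_crossing_edge {A : Finset V} {S : Set V} :
    ∀ {x y : V} (p : G.Walk x y), x ∉ A → y ∈ A → (∀ z ∈ p.support, z ∈ S) →
      ∃ u a, u ∈ S ∧ u ∉ A ∧ a ∈ A ∧ G.Adj u a := by
  intro x y p
  induction p with
  | nil => intro hx hy _; exact absurd hy hx
  | cons h q ih =>
    intro hx hy hS
    rename_i t s r
    by_cases hs : s ∈ A
    · exact ⟨t, s, hS t (by simp), hx, hs, h⟩
    · exact ih hs hy (fun z hz => hS z (by simp [hz]))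

/-- Potential function: how far `U` is from `U₂`. -/
noncomputable def phi (G : SimpleGraph V) (U₂ U : Finset V) : ℕ :=
  (U₂.card - (U ∩ U₂).card) +
    (if (U ∩ U₂).Nonempty then 0 else sInf {d | ∃ a ∈ U, ∃ b ∈ U₂, G.dist a b = d})

/-- One swap step: trade a vertex of `U₁` for a new one, decreasing the potential. -/
lemma step_lemma (hconn : G.Connected) (hacyc : G.IsAcyclic) {U₁ U₂ : Finset V}
    (hc₁ : (G.induce (↑U₁ : Set V)).Connected) (hc₂ : (G.induce (↑U₂ : Set V)).Connected)
    (hcard : U₁.card = U₂.card) (hne : U₁ ≠ U₂) :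
    ∃ U' : Finset V, (G.induce (↑U' : Set V)).Connected ∧ U'.card = U₁.card ∧
      (U₁ ∩ U').card = U₁.card - 1 ∧ phi G U₂ U' < phi G U₂ U₁ := by
  have hU₁ne : U₁.Nonempty := by
    obtain ⟨⟨x, hx⟩⟩ := hc₁.nonempty
    exact ⟨x, hx⟩
  have hU₂ne : U₂.Nonempty := by
    obtain ⟨⟨x, hx⟩⟩ := hc₂.nonempty
    exact ⟨x, hx⟩
  have hsd₁ : (U₁ \ U₂).Nonempty := by
    rw [Finset.sdiff_nonempty]
    intro hsub
    exact hne (Finset.eq_of_subset_of_card_le hsub (le_of_eq hcard.symm))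
  by_cases hint : (U₁ ∩ U₂).Nonempty
  · -- intersecting case
    obtain ⟨x, hx⟩ := id hint
    have hxx := Finset.mem_inter.mp hx
    have hsd₂ : (U₂ \ U₁).Nonempty := by
      rw [Finset.sdiff_nonempty]
      intro hsub
      exact hne (Finset.eq_of_subset_of_card_le hsub (le_of_eq hcard)).symm
    obtain ⟨b, hb⟩ := hsd₂
    have hbb := Finset.mem_sdiff.mp hb
    have hun : (G.induce ((↑U₁ : Set V) ∪ ↑U₂)).Connected := by
      refine SimpleGraph.induce_union_connected hc₁.preconnected hc₂.preconnected ⟨x, ?_⟩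
      exact ⟨hxx.1, hxx.2⟩
    obtain ⟨p, hps⟩ := exists_walk_in_set hun (Set.mem_union_right _ hbb.1)
      (Set.mem_union_left _ hxx.1)
    obtain ⟨u, a, huS, huU₁, haU₁, hadj⟩ :=
      exists_crossing_edge (A := U₁) p hbb.2 hxx.1 hps
    have huU₂ : u ∈ U₂ := by
      rcases huS with h | h
      · exact absurd h huU₁
      · exact h
    obtain ⟨ℓ, hℓ, hℓmax⟩ := Finset.exists_max_image (U₁ \ U₂) (fun y => G.dist u y) hsd₁
    have hℓℓ := Finset.mem_sdiff.mp hℓ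
    have hℓu : ℓ ≠ u := fun h => hℓℓ.2 (h ▸ huU₂)
    have hcW : (G.induce (↑(insert u U₁) : Set V)).Connected :=
      insert_connected hc₁ haU₁ (hadj.symm)
    refine ⟨(insert u U₁).erase ℓ, ?_, ?_, ?_, ?_⟩
    · refine erase_connected (Finset.mem_insert_self u U₁) hℓu.symm hcW ?_
      intro y hy hyℓ p hp
      by_cases hyU₂ : y ∈ U₂
      · intro hmem
        exact hℓℓ.2 (path_support_subset hacyc hc₂ hyU₂ huU₂ hp ℓ hmem)
      · have hyU₁ : y ∈ U₁ := by
          rcases Finset.mem_insert.mp hy with h | h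
          · exact absurd (h ▸ huU₂) hyU₂
          · exact h
        exact not_mem_path_of_max hacyc
          (hℓmax y (Finset.mem_sdiff.mpr ⟨hyU₁, hyU₂⟩)) hyℓ hp
    · rw [Finset.card_erase_of_mem (Finset.mem_insert_of_mem hℓℓ.1),
        Finset.card_insert_of_notMem huU₁]
      omega
    · have : U₁ ∩ (insert u U₁).erase ℓ = U₁.erase ℓ := by
        ext y
        simp only [Finset.mem_inter, Finset.mem_erase, Finset.mem_insert]
        constructor
        · rintro ⟨h1, h2, _⟩; exact ⟨h2, h1⟩
        · rintro ⟨h1, h2⟩; exact ⟨h2, h1, Or.inr h2⟩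
      rw [this, Finset.card_erase_of_mem hℓℓ.1]
    · have hsub : insert u (U₁ ∩ U₂) ⊆ (insert u U₁).erase ℓ ∩ U₂ := by
        intro y hy
        rcases Finset.mem_insert.mp hy with rfl | hy'
        · exact Finset.mem_inter.mpr ⟨Finset.mem_erase.mpr ⟨Ne.symm hℓu, Finset.mem_insert_self _ _⟩, huU₂⟩
        · have hy'' := Finset.mem_inter.mp hy'
          refine Finset.mem_inter.mpr ⟨Finset.mem_erase.mpr ⟨?_, Finset.mem_insert_of_mem hy''.1⟩, hy''.2⟩
          rintro rfl; exact hℓℓ.2 hy''.2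
      have hunotint : u ∉ U₁ ∩ U₂ := fun h => huU₁ (Finset.mem_inter.mp h).1
      have hc1 : (U₁ ∩ U₂).card + 1 ≤ (((insert u U₁).erase ℓ) ∩ U₂).card := by
        rw [← Finset.card_insert_of_notMem hunotint]
        exact Finset.card_le_card hsub
      have hc2 : (((insert u U₁).erase ℓ) ∩ U₂).card ≤ U₂.card :=
        Finset.card_le_card Finset.inter_subset_right
      have hne' : (((insert u U₁).erase ℓ) ∩ U₂).Nonempty :=
        ⟨u, hsub (Finset.mem_insert_self _ _)⟩
      simp only [phi, if_pos hint, if_pos hne']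
      omega
  · -- disjoint case
    obtain ⟨a₀, ha₀⟩ := id hU₁ne
    obtain ⟨b₀, hb₀⟩ := hU₂ne
    set D : Set ℕ := {d | ∃ a ∈ U₁, ∃ b ∈ U₂, G.dist a b = d} with hD
    have hDne : D.Nonempty := ⟨_, a₀, ha₀, b₀, hb₀, rfl⟩
    obtain ⟨a, ha, b, hb, hab⟩ := Nat.sInf_mem hDne
    have hmin : ∀ a' ∈ U₁, ∀ b' ∈ U₂, sInf D ≤ G.dist a' b' :=
      fun a' ha' b' hb' => Nat.sInf_le ⟨a', ha', b', hb', rfl⟩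
    have hab' : a ≠ b := by
      rintro rfl
      exact hint ⟨a, Finset.mem_inter.mpr ⟨ha, hb⟩⟩
    obtain ⟨p, hp⟩ := hconn.exists_walk_length_eq_dist a b
    have hqp : p.bypass.IsPath := p.bypass_isPath
    have hqlen : p.bypass.length = G.dist a b :=
      le_antisymm (hp ▸ SimpleGraph.Walk.length_bypass_le p) (SimpleGraph.dist_le _)
    obtain ⟨w, hadj, q', hq'⟩ := SimpleGraph.Walk.exists_eq_cons_of_ne hab' p.bypass
    have hq'path : q'.IsPath := by
      rw [hq'] at hqp
      exact ((SimpleGraph.Walk.cons_isPath_iff hadj q').mp hqp).1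
    have hq'len : q'.length + 1 = G.dist a b := by
      rw [hq', SimpleGraph.Walk.length_cons] at hqlen
      omega
    have hwU₁ : w ∉ U₁ := by
      intro hwU₁
      have h1 := hmin w hwU₁ b hb
      have h2 : G.dist w b ≤ q'.length := SimpleGraph.dist_le q'
      omega
    obtain ⟨ℓ, hℓ, hℓmax⟩ := Finset.exists_max_image U₁ (fun y => G.dist w y) hU₁ne
    have hℓw : w ≠ ℓ := fun h => hwU₁ (h ▸ hℓ)
    have hcW : (G.induce (↑(insert w U₁) : Set V)).Connected :=
      insert_connected hc₁ ha hadj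
    have hwmem : w ∈ (insert w U₁).erase ℓ :=
      Finset.mem_erase.mpr ⟨hℓw, Finset.mem_insert_self _ _⟩
    refine ⟨(insert w U₁).erase ℓ, ?_, ?_, ?_, ?_⟩
    · refine erase_connected (Finset.mem_insert_self w U₁) hℓw hcW ?_
      intro y hy hyℓ p hp
      rcases Finset.mem_insert.mp hy with rfl | hyU₁
      · -- path from w to w is nil
        have : (⟨p, hp⟩ : G.Path y y) = ⟨SimpleGraph.Walk.nil, SimpleGraph.Walk.IsPath.nil⟩ :=
          isAcyclic_iff_path_unique.mp hacyc _ _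
        have hpn : p = SimpleGraph.Walk.nil := congrArg Subtype.val this
        rw [hpn]
        simp [Ne.symm hyℓ]
      · exact not_mem_path_of_max hacyc (hℓmax y hyU₁) hyℓ hp
    · rw [Finset.card_erase_of_mem (Finset.mem_insert_of_mem hℓ),
        Finset.card_insert_of_notMem hwU₁]
      omega
    · have : U₁ ∩ (insert w U₁).erase ℓ = U₁.erase ℓ := by
        ext y
        simp only [Finset.mem_inter, Finset.mem_erase, Finset.mem_insert]
        constructor
        · rintro ⟨h1, h2, _⟩; exact ⟨h2, h1⟩
        · rintro ⟨h1, h2⟩; exact ⟨h2, h1, Or.inr h2⟩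
      rw [this, Finset.card_erase_of_mem hℓ]
    · have hd₀pos : 1 ≤ sInf D := by
        rcases Nat.eq_zero_or_pos (sInf D) with h | h
        · rw [h] at hab
          exact absurd (by omega : G.dist a b = 0) (by
            intro h0
            obtain ⟨pp, hpp⟩ := hconn.exists_walk_length_eq_dist a b
            rw [h0] at hpp
            exact hab' (SimpleGraph.Walk.eq_of_length_eq_zero hpp))
        · exact h
      have hcint : (U₁ ∩ U₂).card = 0 := by
        rw [Finset.card_eq_zero, ← Finset.not_nonempty_iff_eq_empty]
        exact hint
      by_cases hint' : (((insert w U₁).erase ℓ) ∩ U₂).Nonempty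
      · have hc2 : (((insert w U₁).erase ℓ) ∩ U₂).card ≤ U₂.card :=
          Finset.card_le_card Finset.inter_subset_right
        simp only [phi, if_pos hint', if_neg hint, hcint]
        rw [← hD]
        omega
      · have hc0 : (((insert w U₁).erase ℓ) ∩ U₂).card = 0 := by
          rw [Finset.card_eq_zero, ← Finset.not_nonempty_iff_eq_empty]
          exact hint'
        have hD'le : sInf {d | ∃ a ∈ (insert w U₁).erase ℓ, ∃ b ∈ U₂, G.dist a b = d}
            ≤ G.dist w b := Nat.sInf_le ⟨w, hwmem, b, hb, rfl⟩
        have hwb : G.dist w b ≤ q'.length := SimpleGraph.dist_le q'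
        simp only [phi, if_neg hint', if_neg hint, hcint, hc0]
        rw [← hD]
        omega

end helpers



/-- Any connected `i`-vertex subgraph of a tree can be morphed into any other
by a sequence of connected `i`-vertex subgraphs, each obtained from the
previous one by removing one vertex and adding another
(so consecutive sets intersect in `i - 1` vertices). -/
theorem tree_subtree_morph {V : Type*} [Fintype V] [DecidableEq V]
    (G : SimpleGraph V) (hconn : G.Connected) (hacyc : G.IsAcyclic)
    (i : ℕ) (U₁ U₂ : Finset V)
    (h₁ : U₁.card = i) (h₂ : U₂.card = i)
    (hc₁ : (G.induce (↑U₁ : Set V)).Connected)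
    (hc₂ : (G.induce (↑U₂ : Set V)).Connected) :
    ∃ (m : ℕ) (W : ℕ → Finset V),
      W 0 = U₁ ∧ W m = U₂ ∧
      (∀ k ≤ m, (W k).card = i ∧ (G.induce (↑(W k) : Set V)).Connected) ∧
      (∀ k < m, (W k ∩ W (k + 1)).card = i - 1) := by
  suffices H : ∀ n (U : Finset V), (G.induce (↑U : Set V)).Connected → U.card = i →
      phi G U₂ U = n →
      ∃ (m : ℕ) (W : ℕ → Finset V),
        W 0 = U ∧ W m = U₂ ∧
        (∀ k ≤ m, (W k).card = i ∧ (G.induce (↑(W k) : Set V)).Connected) ∧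
        (∀ k < m, (W k ∩ W (k + 1)).card = i - 1) by
    exact H _ U₁ hc₁ h₁ rfl
  intro n
  induction n using Nat.strong_induction_on with
  | _ n ih =>
    intro U hcU hcard hphi
    by_cases heq : U = U₂
    · subst heq
      exact ⟨0, fun _ => U, rfl, rfl, fun k _ => ⟨hcard, hcU⟩, fun k hk => absurd hk (by omega)⟩
    · obtain ⟨U', hcU', hcard', hinter, hlt⟩ :=
        step_lemma hconn hacyc hcU hc₂ (hcard.trans h₂.symm) heq
      obtain ⟨m, W, hW0, hWm, hWr, hWc⟩ :=
        ih (phi G U₂ U') (hphi ▸ hlt) U' hcU' (hcard'.trans hcard) rfl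
      refine ⟨m + 1, fun k => match k with | 0 => U | j + 1 => W j, rfl, hWm, ?_, ?_⟩
      · intro k hk
        match k with
        | 0 => exact ⟨hcard, hcU⟩
        | j + 1 => exact hWr j (by omega)
      · intro k hk
        match k with
        | 0 =>
          show (U ∩ W 0).card = i - 1
          rw [hW0, hinter, hcard]
        | j + 1 => exact hWc j (by omega)
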